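/- Consider the two-state restless bandit arm described in the context, with parameters satisfying o₀ < o₁ (both in (0,1)), t₁' < t₁ and t₀' < t₀ (all in [0,1]), rewards R₀ ≤ R₁, and discount β ∈ (0,1). Let α = max(t₁ − t₁', t₀ − t₀'). For each subsidy m ∈ ℝ, let V_m : [0,1] → ℝ be a bounded function satisfying the Bellman equation V_m(x) = max( m + β·V_m(Γ₀(x)), r(x) + β·( p₁(x)·V_m(Γ₁(τ₁(x))) + p₀(x)·V_m(Γ₁(τ₀(x))) ) ) for all x ∈ [0,1], and write V_m(x; a=0) = m + β·V_m(Γ₀(x)) and V_m(x; a=1) = r(x) + β·( p₁(x)·V_m(Γ₁(τ₁(x))) + p₀(x)·V_m(Γ₁(τ₀(x))) ). If α·β ≤ 1/2 and Γ₁(1) ≤ Γ₀(0), then the arm is indexable: for every belief x ∈ [0,1] and all m' ≥ m, V_m(x; a=0) ≥ V_m(x; a=1) implies V_{m'}(x; a=0) ≥ V_{m'}(x; a=1). -/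

import Mathlib

/-- Belief propagation map: next-round belief of being in state 1, given transition
probabilities `t` (from state 1) and `t'` (from state 0). -/
def GammaMap (t t' x : ℝ) : ℝ := x * t + (1 - x) * t'

/-- Probability of observation 1 under the active action at belief `x`, with observation
probabilities `o₁` (in state 1) and `o₀` (in state 0). -/
def obsProb (o₀ o₁ x : ℝ) : ℝ := x * o₁ + (1 - x) * o₀

/-- Bayes posterior of state 1 given observation 1. -/
noncomputable def postObs1 (o₀ o₁ x : ℝ) : ℝ := x * o₁ / obsProb o₀ o₁ x

/-- Bayes posterior of state 1 given observation 0. -/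
noncomputable def postObs0 (o₀ o₁ x : ℝ) : ℝ := x * (1 - o₁) / (1 - obsProb o₀ o₁ x)

/-- Expected immediate reward of the active action at belief `x`. -/
def actReward (o₀ o₁ R₀ R₁ x : ℝ) : ℝ :=
  obsProb o₀ o₁ x * R₁ + (1 - obsProb o₀ o₁ x) * R₀

/-- Value of the passive action (subsidy `m`) at belief `x`, continuing with value
function `V`. -/
def passiveValue (t₀ t₀' β m : ℝ) (V : ℝ → ℝ) (x : ℝ) : ℝ :=
  m + β * V (GammaMap t₀ t₀' x)

/-- Value of the active action at belief `x`, continuing with value function `V`. -/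
noncomputable def activeValue (o₀ o₁ t₁ t₁' R₀ R₁ β : ℝ) (V : ℝ → ℝ) (x : ℝ) : ℝ :=
  actReward o₀ o₁ R₀ R₁ x +
    β * (obsProb o₀ o₁ x * V (GammaMap t₁ t₁' (postObs1 o₀ o₁ x)) +
      (1 - obsProb o₀ o₁ x) * V (GammaMap t₁ t₁' (postObs0 o₀ o₁ x)))

def unitI : Set ℝ := Set.Icc 0 1

structure IndexCtx where
  o₀ : ℝ
  o₁ : ℝ
  t₁ : ℝ
  t₁' : ℝ
  t₀ : ℝ
  t₀' : ℝ
  R₀ : ℝ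
  R₁ : ℝ
  β : ℝ
  ho₀ : o₀ ∈ Set.Ioo (0:ℝ) 1
  ho₁ : o₁ ∈ Set.Ioo (0:ℝ) 1
  ho : o₀ < o₁
  ht₁lt : t₁' < t₁
  ht₀lt : t₀' < t₀
  ht₁ : t₁ ∈ Set.Icc (0:ℝ) 1
  ht₁' : t₁' ∈ Set.Icc (0:ℝ) 1
  ht₀ : t₀ ∈ Set.Icc (0:ℝ) 1
  ht₀' : t₀' ∈ Set.Icc (0:ℝ) 1
  hR : R₀ ≤ R₁
  hβ : β ∈ Set.Ioo (0:ℝ) 1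
  hαβ : max (t₁ - t₁') (t₀ - t₀') * β ≤ 1/2
  hΓ : GammaMap t₁ t₁' 1 ≤ GammaMap t₀ t₀' 0

namespace IndexCtx

variable (P : IndexCtx)

noncomputable def pp (x : ℝ) : ℝ := obsProb P.o₀ P.o₁ x
noncomputable def τ1 (x : ℝ) : ℝ := postObs1 P.o₀ P.o₁ x
noncomputable def τ0 (x : ℝ) : ℝ := postObs0 P.o₀ P.o₁ x
noncomputable def am (x : ℝ) : ℝ := GammaMap P.t₁ P.t₁' (P.τ1 x)
noncomputable def bm (x : ℝ) : ℝ := GammaMap P.t₁ P.t₁' (P.τ0 x)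
noncomputable def zm (x : ℝ) : ℝ := GammaMap P.t₀ P.t₀' x
noncomputable def Ef (f : ℝ → ℝ) (x : ℝ) : ℝ :=
  P.pp x * f (P.am x) + (1 - P.pp x) * f (P.bm x)
noncomputable def Pv (m : ℝ) (f : ℝ → ℝ) (x : ℝ) : ℝ := passiveValue P.t₀ P.t₀' P.β m f x
noncomputable def Av (f : ℝ → ℝ) (x : ℝ) : ℝ :=
  activeValue P.o₀ P.o₁ P.t₁ P.t₁' P.R₀ P.R₁ P.β f x
noncomputable def ρ : ℝ := (P.o₁ - P.o₀) * (P.R₁ - P.R₀)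
noncomputable def α : ℝ := max (P.t₁ - P.t₁') (P.t₀ - P.t₀')
noncomputable def L : ℝ := P.ρ / (1 - P.α * P.β)

lemma Av_eq (f : ℝ → ℝ) (x : ℝ) :
    P.Av f x = actReward P.o₀ P.o₁ P.R₀ P.R₁ x + P.β * P.Ef f x := rfl

-- numeric facts
lemma hβ0 : 0 < P.β := P.hβ.1
lemma hβ1 : P.β < 1 := P.hβ.2
lemma hρ0 : 0 ≤ P.ρ := mul_nonneg (by linarith [P.ho]) (by linarith [P.hR])
lemma hα_t1 : P.t₁ - P.t₁' ≤ P.α := le_max_left _ _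
lemma hα_t0 : P.t₀ - P.t₀' ≤ P.α := le_max_right _ _
lemma hα0 : 0 < P.α := lt_of_lt_of_le (by linarith [P.ht₁lt]) P.hα_t1
lemma hα1 : P.α ≤ 1 := by
  have h1 := P.ht₁.2; have h2 := P.ht₁'.1; have h3 := P.ht₀.2; have h4 := P.ht₀'.1
  exact max_le (by linarith) (by linarith)
lemma hden : 0 < 1 - P.α * P.β := by
  have := P.hαβ
  unfold α; linarith
lemma hLval : P.L * (1 - P.α * P.β) = P.ρ := by
  unfold L; exact div_mul_cancel₀ _ P.hden.ne'
lemma hL0 : 0 ≤ P.L := div_nonneg P.hρ0 (le_of_lt P.hden)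
lemma hαβ' : P.α * P.β ≤ 1/2 := P.hαβ
lemma hαβL : P.α * P.β * P.L ≤ P.ρ := by
  have h1 := P.hLval; have h2 := P.hαβ'; have h3 := P.hL0
  nlinarith
lemma hLeq : P.ρ + P.α * P.β * P.L = P.L := by
  have h1 := P.hLval; nlinarith [P.hLval]

-- pointwise facts
lemma pp_ge {x : ℝ} (hx : x ∈ unitI) : P.o₀ ≤ P.pp x := by
  obtain ⟨h0, h1⟩ := hx
  have := P.ho
  unfold pp obsProb; nlinarith
lemma pp_le {x : ℝ} (hx : x ∈ unitI) : P.pp x ≤ P.o₁ := by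
  obtain ⟨h0, h1⟩ := hx
  have := P.ho
  unfold pp obsProb; nlinarith
lemma pp_pos {x : ℝ} (hx : x ∈ unitI) : 0 < P.pp x := lt_of_lt_of_le P.ho₀.1 (P.pp_ge hx)
lemma pp_lt_one {x : ℝ} (hx : x ∈ unitI) : P.pp x < 1 := lt_of_le_of_lt (P.pp_le hx) P.ho₁.2
lemma pp_nonneg {x : ℝ} (hx : x ∈ unitI) : 0 ≤ P.pp x := le_of_lt (P.pp_pos hx)
lemma one_sub_pp_pos {x : ℝ} (hx : x ∈ unitI) : 0 < 1 - P.pp x := by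
  linarith [P.pp_lt_one hx]

lemma pp_diff (u v : ℝ) : P.pp v - P.pp u = (P.o₁ - P.o₀) * (v - u) := by
  unfold pp obsProb; ring

lemma tau1_mem {x : ℝ} (hx : x ∈ unitI) : P.τ1 x ∈ unitI := by
  obtain ⟨h0, h1⟩ := hx
  have hp := P.pp_pos ⟨h0, h1⟩
  have ho0 := P.ho₀.1
  unfold pp obsProb at hp
  unfold τ1 postObs1 obsProb
  constructor
  · exact div_nonneg (mul_nonneg h0 (le_of_lt P.ho₁.1)) (le_of_lt hp)
  · rw [div_le_one hp]
    nlinarith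
lemma tau0_mem {x : ℝ} (hx : x ∈ unitI) : P.τ0 x ∈ unitI := by
  obtain ⟨h0, h1⟩ := hx
  have hp := P.one_sub_pp_pos ⟨h0, h1⟩
  unfold pp obsProb at hp
  unfold τ0 postObs0 obsProb
  constructor
  · exact div_nonneg (mul_nonneg h0 (by linarith [P.ho₁.2])) (by linarith)
  · rw [div_le_one (by linarith)]
    nlinarith [mul_nonneg (by linarith : (0:ℝ) ≤ 1 - x) (by linarith [P.ho₀.2] : (0:ℝ) ≤ 1 - P.o₀)]

lemma tau1_diff {u v : ℝ} (hu : u ∈ unitI) (hv : v ∈ unitI) :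
    P.τ1 v - P.τ1 u = P.o₁ * P.o₀ * (v - u) / (P.pp u * P.pp v) := by
  have h1 := (P.pp_pos hu).ne'
  have h2 := (P.pp_pos hv).ne'
  unfold τ1 postObs1
  unfold pp at h1 h2 ⊢
  field_simp
  unfold obsProb
  ring
lemma tau0_diff {u v : ℝ} (hu : u ∈ unitI) (hv : v ∈ unitI) :
    P.τ0 v - P.τ0 u = (1 - P.o₁) * (1 - P.o₀) * (v - u) / ((1 - P.pp u) * (1 - P.pp v)) := by
  have h1 := (P.one_sub_pp_pos hu).ne'
  have h2 := (P.one_sub_pp_pos hv).ne'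
  unfold τ0 postObs0
  unfold pp at h1 h2 ⊢
  field_simp
  unfold obsProb
  ring
lemma tau_gap {u : ℝ} (hu : u ∈ unitI) :
    P.τ1 u - P.τ0 u = u * (1 - u) * (P.o₁ - P.o₀) / (P.pp u * (1 - P.pp u)) := by
  have h1 := (P.pp_pos hu).ne'
  have h2 := (P.one_sub_pp_pos hu).ne'
  unfold τ1 τ0 postObs1 postObs0
  unfold pp at h1 h2 ⊢
  field_simp
  unfold obsProb
  ring

lemma bracket_identity {u : ℝ} (hu : u ∈ unitI) :
    P.o₁ * P.o₀ / P.pp u + (1 - P.o₁) * (1 - P.o₀) / (1 - P.pp u)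
      + (P.o₁ - P.o₀) * (u * (1 - u) * (P.o₁ - P.o₀) / (P.pp u * (1 - P.pp u))) = 1 := by
  have h1 := (P.pp_pos hu).ne'
  have h2 := (P.one_sub_pp_pos hu).ne'
  unfold pp at h1 h2 ⊢
  field_simp
  unfold obsProb
  ring

-- part 2: appended to w1

lemma gamma_mem {t t' s : ℝ} (ht : t ∈ Set.Icc (0:ℝ) 1) (ht' : t' ∈ Set.Icc (0:ℝ) 1)
    (hs : s ∈ unitI) : GammaMap t t' s ∈ unitI := by
  obtain ⟨hs0, hs1⟩ := hs
  constructor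
  · unfold GammaMap; nlinarith [ht.1, ht'.1]
  · unfold GammaMap; nlinarith [ht.2, ht'.2]

lemma am_mem {x : ℝ} (hx : x ∈ unitI) : P.am x ∈ unitI :=
  gamma_mem P.ht₁ P.ht₁' (P.tau1_mem hx)
lemma bm_mem {x : ℝ} (hx : x ∈ unitI) : P.bm x ∈ unitI :=
  gamma_mem P.ht₁ P.ht₁' (P.tau0_mem hx)
lemma zm_mem {x : ℝ} (hx : x ∈ unitI) : P.zm x ∈ unitI :=
  gamma_mem P.ht₀ P.ht₀' hx

lemma am_diff (u v : ℝ) : P.am v - P.am u = (P.t₁ - P.t₁') * (P.τ1 v - P.τ1 u) := by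
  unfold am GammaMap; ring
lemma bm_diff (u v : ℝ) : P.bm v - P.bm u = (P.t₁ - P.t₁') * (P.τ0 v - P.τ0 u) := by
  unfold bm GammaMap; ring
lemma zm_diff (u v : ℝ) : P.zm v - P.zm u = (P.t₀ - P.t₀') * (v - u) := by
  unfold zm GammaMap; ring

lemma tau1_mono {u v : ℝ} (hu : u ∈ unitI) (hv : v ∈ unitI) (huv : u ≤ v) :
    P.τ1 u ≤ P.τ1 v := by
  have h := P.tau1_diff hu hv
  have h1 := P.pp_pos hu; have h2 := P.pp_pos hv
  have hnum : 0 ≤ P.o₁ * P.o₀ * (v - u) :=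
    mul_nonneg (mul_nonneg (le_of_lt P.ho₁.1) (le_of_lt P.ho₀.1)) (by linarith)
  nlinarith [div_nonneg hnum (le_of_lt (mul_pos h1 h2))]
lemma tau0_mono {u v : ℝ} (hu : u ∈ unitI) (hv : v ∈ unitI) (huv : u ≤ v) :
    P.τ0 u ≤ P.τ0 v := by
  have h := P.tau0_diff hu hv
  have h1 := P.one_sub_pp_pos hu; have h2 := P.one_sub_pp_pos hv
  have hnum : 0 ≤ (1 - P.o₁) * (1 - P.o₀) * (v - u) :=
    mul_nonneg (mul_nonneg (by linarith [P.ho₁.2]) (by linarith [P.ho₀.2])) (by linarith)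
  nlinarith [div_nonneg hnum (le_of_lt (mul_pos h1 h2))]
lemma tau_order {u : ℝ} (hu : u ∈ unitI) : P.τ0 u ≤ P.τ1 u := by
  have h := P.tau_gap hu
  have h1 := P.pp_pos hu; have h2 := P.one_sub_pp_pos hu
  have hnum : 0 ≤ u * (1 - u) * (P.o₁ - P.o₀) :=
    mul_nonneg (mul_nonneg hu.1 (by linarith [hu.2])) (by linarith [P.ho])
  nlinarith [div_nonneg hnum (le_of_lt (mul_pos h1 h2))]

lemma am_mono {u v : ℝ} (hu : u ∈ unitI) (hv : v ∈ unitI) (huv : u ≤ v) :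
    P.am u ≤ P.am v := by
  have h := P.am_diff u v
  nlinarith [P.tau1_mono hu hv huv, P.ht₁lt]
lemma bm_mono {u v : ℝ} (hu : u ∈ unitI) (hv : v ∈ unitI) (huv : u ≤ v) :
    P.bm u ≤ P.bm v := by
  have h := P.bm_diff u v
  nlinarith [P.tau0_mono hu hv huv, P.ht₁lt]
lemma zm_mono {u v : ℝ} (huv : u ≤ v) : P.zm u ≤ P.zm v := by
  have h := P.zm_diff u v
  nlinarith [P.ht₀lt]
lemma bm_le_am {u : ℝ} (hu : u ∈ unitI) : P.bm u ≤ P.am u := by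
  have h := P.am_diff u u  -- dummy
  have h2 : P.am u - P.bm u = (P.t₁ - P.t₁') * (P.τ1 u - P.τ0 u) := by
    unfold am bm GammaMap; ring
  nlinarith [P.tau_order hu, P.ht₁lt]

lemma am_le_t₁ {x : ℝ} (hx : x ∈ unitI) : P.am x ≤ P.t₁ := by
  have h := P.tau1_mem hx
  unfold am GammaMap
  nlinarith [h.1, h.2, P.ht₁lt]
lemma bm_le_t₁ {x : ℝ} (hx : x ∈ unitI) : P.bm x ≤ P.t₁ := by
  have h := P.tau0_mem hx
  unfold bm GammaMap
  nlinarith [h.1, h.2, P.ht₁lt]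
lemma t₀'_le_zm {x : ℝ} (hx : x ∈ unitI) : P.t₀' ≤ P.zm x := by
  unfold zm GammaMap
  nlinarith [hx.1, hx.2, P.ht₀lt]
lemma t₁_le_t₀' : P.t₁ ≤ P.t₀' := by
  have h := P.hΓ
  unfold GammaMap at h
  linarith
lemma am_le_zm {x y : ℝ} (hx : x ∈ unitI) (hy : y ∈ unitI) : P.am x ≤ P.zm y :=
  le_trans (P.am_le_t₁ hx) (le_trans P.t₁_le_t₀' (P.t₀'_le_zm hy))
lemma bm_le_zm {x y : ℝ} (hx : x ∈ unitI) (hy : y ∈ unitI) : P.bm x ≤ P.zm y :=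
  le_trans (P.bm_le_t₁ hx) (le_trans P.t₁_le_t₀' (P.t₀'_le_zm hy))

lemma Ef_decomp (f : ℝ → ℝ) (u v : ℝ) :
    P.Ef f v - P.Ef f u
      = P.pp v * (f (P.am v) - f (P.am u)) + (1 - P.pp v) * (f (P.bm v) - f (P.bm u))
        + (P.pp v - P.pp u) * (f (P.am u) - f (P.bm u)) := by
  unfold Ef; ring

lemma Ef_mono {f : ℝ → ℝ} (hf : ∀ p q, p ∈ unitI → q ∈ unitI → p ≤ q → f p ≤ f q)
    {u v : ℝ} (hu : u ∈ unitI) (hv : v ∈ unitI) (huv : u ≤ v) :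
    P.Ef f u ≤ P.Ef f v := by
  have hd := P.Ef_decomp f u v
  have h1 : f (P.am u) ≤ f (P.am v) := hf _ _ (P.am_mem hu) (P.am_mem hv) (P.am_mono hu hv huv)
  have h2 : f (P.bm u) ≤ f (P.bm v) := hf _ _ (P.bm_mem hu) (P.bm_mem hv) (P.bm_mono hu hv huv)
  have h3 : f (P.bm u) ≤ f (P.am u) := hf _ _ (P.bm_mem hu) (P.am_mem hu) (P.bm_le_am hu)
  have h4 : 0 ≤ P.pp v - P.pp u := by
    have := P.pp_diff u v; nlinarith [P.ho]
  nlinarith [P.pp_nonneg hv, P.one_sub_pp_pos hv]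

lemma Ef_anti {f : ℝ → ℝ} (hf : ∀ p q, p ∈ unitI → q ∈ unitI → p ≤ q → f q ≤ f p)
    {u v : ℝ} (hu : u ∈ unitI) (hv : v ∈ unitI) (huv : u ≤ v) :
    P.Ef f v ≤ P.Ef f u := by
  have hd := P.Ef_decomp f u v
  have h1 : f (P.am v) ≤ f (P.am u) := hf _ _ (P.am_mem hu) (P.am_mem hv) (P.am_mono hu hv huv)
  have h2 : f (P.bm v) ≤ f (P.bm u) := hf _ _ (P.bm_mem hu) (P.bm_mem hv) (P.bm_mono hu hv huv)
  have h3 : f (P.am u) ≤ f (P.bm u) := hf _ _ (P.bm_mem hu) (P.am_mem hu) (P.bm_le_am hu)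
  have h4 : 0 ≤ P.pp v - P.pp u := by
    have := P.pp_diff u v; nlinarith [P.ho]
  nlinarith [P.pp_nonneg hv, P.one_sub_pp_pos hv]

lemma Ef_lip {f : ℝ → ℝ}
    (hf : ∀ p q, p ∈ unitI → q ∈ unitI → p ≤ q → f q - f p ≤ P.L * (q - p))
    {u v : ℝ} (hu : u ∈ unitI) (hv : v ∈ unitI) (huv : u ≤ v) :
    P.Ef f v - P.Ef f u ≤ P.α * P.L * (v - u) := by
  have hd := P.Ef_decomp f u v
  have hppv := P.pp_nonneg hv
  have hppv1 : (0:ℝ) ≤ 1 - P.pp v := le_of_lt (P.one_sub_pp_pos hv)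
  have hLnn := P.hL0
  have ht1 : (0:ℝ) ≤ P.t₁ - P.t₁' := by linarith [P.ht₁lt]
  -- term 1
  have h1 : f (P.am v) - f (P.am u) ≤ P.L * (P.am v - P.am u) :=
    hf _ _ (P.am_mem hu) (P.am_mem hv) (P.am_mono hu hv huv)
  have e1 : P.pp v * (P.L * (P.am v - P.am u))
      = P.L * (P.t₁ - P.t₁') * (P.o₁ * P.o₀ * (v - u) / P.pp u) := by
    rw [P.am_diff u v, P.tau1_diff hu hv]
    have h2 := (P.pp_pos hu).ne'
    have h3 := (P.pp_pos hv).ne'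
    field_simp
  have T1 : P.pp v * (f (P.am v) - f (P.am u))
      ≤ P.L * (P.t₁ - P.t₁') * (P.o₁ * P.o₀ * (v - u) / P.pp u) := by
    rw [← e1]; exact mul_le_mul_of_nonneg_left h1 hppv
  -- term 2
  have h1' : f (P.bm v) - f (P.bm u) ≤ P.L * (P.bm v - P.bm u) :=
    hf _ _ (P.bm_mem hu) (P.bm_mem hv) (P.bm_mono hu hv huv)
  have e2 : (1 - P.pp v) * (P.L * (P.bm v - P.bm u))
      = P.L * (P.t₁ - P.t₁') * ((1 - P.o₁) * (1 - P.o₀) * (v - u) / (1 - P.pp u)) := by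
    rw [P.bm_diff u v, P.tau0_diff hu hv]
    have h2 := (P.one_sub_pp_pos hu).ne'
    have h3 := (P.one_sub_pp_pos hv).ne'
    field_simp
  have T2 : (1 - P.pp v) * (f (P.bm v) - f (P.bm u))
      ≤ P.L * (P.t₁ - P.t₁') * ((1 - P.o₁) * (1 - P.o₀) * (v - u) / (1 - P.pp u)) := by
    rw [← e2]; exact mul_le_mul_of_nonneg_left h1' hppv1
  -- term 3
  have h1'' : f (P.am u) - f (P.bm u) ≤ P.L * (P.am u - P.bm u) :=
    hf _ _ (P.bm_mem hu) (P.am_mem hu) (P.bm_le_am hu)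
  have hpd : 0 ≤ P.pp v - P.pp u := by
    have := P.pp_diff u v; nlinarith [P.ho]
  have e3 : (P.pp v - P.pp u) * (P.L * (P.am u - P.bm u))
      = P.L * (P.t₁ - P.t₁')
        * ((P.o₁ - P.o₀) * (v - u) * (u * (1 - u) * (P.o₁ - P.o₀) / (P.pp u * (1 - P.pp u)))) := by
    have hab : P.am u - P.bm u = (P.t₁ - P.t₁') * (P.τ1 u - P.τ0 u) := by
      unfold am bm GammaMap; ring
    rw [hab, P.tau_gap hu, P.pp_diff u v]
    ring
  have T3 : (P.pp v - P.pp u) * (f (P.am u) - f (P.bm u))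
      ≤ P.L * (P.t₁ - P.t₁')
        * ((P.o₁ - P.o₀) * (v - u) * (u * (1 - u) * (P.o₁ - P.o₀) / (P.pp u * (1 - P.pp u)))) := by
    rw [← e3]; exact mul_le_mul_of_nonneg_left h1'' hpd
  -- assemble
  have hsum : P.L * (P.t₁ - P.t₁') * (P.o₁ * P.o₀ * (v - u) / P.pp u)
      + P.L * (P.t₁ - P.t₁') * ((1 - P.o₁) * (1 - P.o₀) * (v - u) / (1 - P.pp u))
      + P.L * (P.t₁ - P.t₁')
        * ((P.o₁ - P.o₀) * (v - u) * (u * (1 - u) * (P.o₁ - P.o₀) / (P.pp u * (1 - P.pp u))))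
      = P.L * (P.t₁ - P.t₁') * (v - u) := by
    have hb := P.bracket_identity hu
    calc P.L * (P.t₁ - P.t₁') * (P.o₁ * P.o₀ * (v - u) / P.pp u)
      + P.L * (P.t₁ - P.t₁') * ((1 - P.o₁) * (1 - P.o₀) * (v - u) / (1 - P.pp u))
      + P.L * (P.t₁ - P.t₁')
        * ((P.o₁ - P.o₀) * (v - u) * (u * (1 - u) * (P.o₁ - P.o₀) / (P.pp u * (1 - P.pp u))))
        = P.L * (P.t₁ - P.t₁') * (v - u)
          * (P.o₁ * P.o₀ / P.pp u + (1 - P.o₁) * (1 - P.o₀) / (1 - P.pp u)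
            + (P.o₁ - P.o₀) * (u * (1 - u) * (P.o₁ - P.o₀) / (P.pp u * (1 - P.pp u)))) := by
          ring
      _ = P.L * (P.t₁ - P.t₁') * (v - u) := by rw [hb]; ring
  have hfin : P.Ef f v - P.Ef f u ≤ P.L * (P.t₁ - P.t₁') * (v - u) := by
    rw [hd, ← hsum]
    linarith [T1, T2, T3]
  have : P.L * (P.t₁ - P.t₁') * (v - u) ≤ P.α * P.L * (v - u) := by
    have hvu : (0:ℝ) ≤ v - u := by linarith
    nlinarith [mul_nonneg (mul_nonneg (sub_nonneg.mpr P.hα_t1) P.hL0) hvu]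
  linarith

lemma Ef_sub (f g : ℝ → ℝ) (x : ℝ) :
    P.Ef (fun y => g y - f y) x = P.Ef g x - P.Ef f x := by
  unfold Ef; ring

lemma Ef_point_osc {h : ℝ → ℝ} {c : ℝ}
    (hosc : ∀ p q, p ∈ unitI → q ∈ unitI → h p - h q ≤ c)
    {u w : ℝ} (hu : u ∈ unitI) (hw : w ∈ unitI) :
    P.Ef h u - h w ≤ c := by
  have h1 : h (P.am u) - h w ≤ c := hosc _ _ (P.am_mem hu) hw
  have h2 : h (P.bm u) - h w ≤ c := hosc _ _ (P.bm_mem hu) hw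
  have e : P.Ef h u - h w
      = P.pp u * (h (P.am u) - h w) + (1 - P.pp u) * (h (P.bm u) - h w) := by
    unfold Ef; ring
  nlinarith [P.pp_nonneg hu, P.one_sub_pp_pos hu]

lemma Ef_osc {h : ℝ → ℝ} {c : ℝ}
    (hosc : ∀ p q, p ∈ unitI → q ∈ unitI → h p - h q ≤ c)
    {u v : ℝ} (hu : u ∈ unitI) (hv : v ∈ unitI) :
    P.Ef h u - P.Ef h v ≤ c := by
  have h1 : P.Ef h u - h (P.am v) ≤ c := P.Ef_point_osc hosc hu (P.am_mem hv)
  have h2 : P.Ef h u - h (P.bm v) ≤ c := P.Ef_point_osc hosc hu (P.bm_mem hv)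
  have e : P.Ef h u - P.Ef h v
      = P.pp v * (P.Ef h u - h (P.am v)) + (1 - P.pp v) * (P.Ef h u - h (P.bm v)) := by
    unfold Ef; ring
  nlinarith [P.pp_nonneg hv, P.one_sub_pp_pos hv]

lemma point_le_Ef {h : ℝ → ℝ}
    (hanti : ∀ p q, p ∈ unitI → q ∈ unitI → p ≤ q → h q ≤ h p)
    {u w : ℝ} (hu : u ∈ unitI) (hw : w ∈ unitI)
    (h1 : P.am u ≤ w) (h2 : P.bm u ≤ w) :
    h w ≤ P.Ef h u := by
  have e1 : h w ≤ h (P.am u) := hanti _ _ (P.am_mem hu) hw h1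
  have e2 : h w ≤ h (P.bm u) := hanti _ _ (P.bm_mem hu) hw h2
  have e : P.Ef h u - h w
      = P.pp u * (h (P.am u) - h w) + (1 - P.pp u) * (h (P.bm u) - h w) := by
    unfold Ef; ring
  nlinarith [P.pp_nonneg hu, P.one_sub_pp_pos hu]

noncomputable def Tb (m : ℝ) (f : ℝ → ℝ) (x : ℝ) : ℝ :=
  max (passiveValue P.t₀ P.t₀' P.β m f x)
    (activeValue P.o₀ P.o₁ P.t₁ P.t₁' P.R₀ P.R₁ P.β f x)

lemma Pv_eq (m : ℝ) (f : ℝ → ℝ) (x : ℝ) :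
    passiveValue P.t₀ P.t₀' P.β m f x = m + P.β * f (P.zm x) := rfl

lemma Av_eq' (f : ℝ → ℝ) (x : ℝ) :
    activeValue P.o₀ P.o₁ P.t₁ P.t₁' P.R₀ P.R₁ P.β f x
      = actReward P.o₀ P.o₁ P.R₀ P.R₁ x + P.β * P.Ef f x := rfl

lemma r_diff (u v : ℝ) :
    actReward P.o₀ P.o₁ P.R₀ P.R₁ v - actReward P.o₀ P.o₁ P.R₀ P.R₁ u
      = P.ρ * (v - u) := by
  unfold actReward obsProb ρ; ring

def MonoI (f : ℝ → ℝ) : Prop := ∀ p q, p ∈ unitI → q ∈ unitI → p ≤ q → f p ≤ f q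
def LipI (P : IndexCtx) (f : ℝ → ℝ) : Prop :=
  ∀ p q, p ∈ unitI → q ∈ unitI → p ≤ q → f q - f p ≤ P.L * (q - p)
def WMonoI (f f' : ℝ → ℝ) : Prop :=
  ∀ p q, p ∈ unitI → q ∈ unitI → p ≤ q → f' q - f q ≤ f' p - f p
def WOscI (Δ : ℝ) (f f' : ℝ → ℝ) : Prop :=
  ∀ p q, p ∈ unitI → q ∈ unitI → (f' p - f p) - (f' q - f q) ≤ Δ

-- passive branch difference bound
lemma Pv_diff_le {m : ℝ} {f : ℝ → ℝ} (hl : P.LipI f)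
    {u v : ℝ} (hu : u ∈ unitI) (hv : v ∈ unitI) (huv : u ≤ v) :
    passiveValue P.t₀ P.t₀' P.β m f v - passiveValue P.t₀ P.t₀' P.β m f u
      ≤ P.β * (P.α * P.L) * (v - u) := by
  rw [P.Pv_eq, P.Pv_eq]
  have h1 : f (P.zm v) - f (P.zm u) ≤ P.L * (P.zm v - P.zm u) :=
    hl _ _ (P.zm_mem hu) (P.zm_mem hv) (P.zm_mono huv)
  have h2 := P.zm_diff u v
  have h3 : P.L * ((P.t₀ - P.t₀') * (v - u)) ≤ P.α * P.L * (v - u) := by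
    nlinarith [mul_nonneg (mul_nonneg (sub_nonneg.mpr P.hα_t0) P.hL0) (by linarith : (0:ℝ) ≤ v - u)]
  have hb := P.hβ0
  rw [h2] at h1
  have h5 : f (P.zm v) - f (P.zm u) ≤ P.α * P.L * (v - u) := by linarith
  nlinarith [mul_le_mul_of_nonneg_left h5 hb.le]

lemma Pv_mono {m : ℝ} {f : ℝ → ℝ} (hm : MonoI f)
    {u v : ℝ} (hu : u ∈ unitI) (hv : v ∈ unitI) (huv : u ≤ v) :
    passiveValue P.t₀ P.t₀' P.β m f u ≤ passiveValue P.t₀ P.t₀' P.β m f v := by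
  rw [P.Pv_eq, P.Pv_eq]
  have h1 : f (P.zm u) ≤ f (P.zm v) := hm _ _ (P.zm_mem hu) (P.zm_mem hv) (P.zm_mono huv)
  nlinarith [P.hβ0]

lemma Av_diff_eq (f : ℝ → ℝ) (u v : ℝ) :
    activeValue P.o₀ P.o₁ P.t₁ P.t₁' P.R₀ P.R₁ P.β f v
      - activeValue P.o₀ P.o₁ P.t₁ P.t₁' P.R₀ P.R₁ P.β f u
      = P.ρ * (v - u) + P.β * (P.Ef f v - P.Ef f u) := by
  rw [P.Av_eq', P.Av_eq']
  have := P.r_diff u v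
  linarith

lemma Av_mono {f : ℝ → ℝ} (hm : MonoI f)
    {u v : ℝ} (hu : u ∈ unitI) (hv : v ∈ unitI) (huv : u ≤ v) :
    activeValue P.o₀ P.o₁ P.t₁ P.t₁' P.R₀ P.R₁ P.β f u
      ≤ activeValue P.o₀ P.o₁ P.t₁ P.t₁' P.R₀ P.R₁ P.β f v := by
  have h1 := P.Av_diff_eq f u v
  have h2 := P.Ef_mono hm hu hv huv
  nlinarith [P.hβ0, P.hρ0, (by linarith : (0:ℝ) ≤ v - u), mul_nonneg P.hρ0 (by linarith : (0:ℝ) ≤ v - u)]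

lemma Av_diff_le {f : ℝ → ℝ} (hl : P.LipI f)
    {u v : ℝ} (hu : u ∈ unitI) (hv : v ∈ unitI) (huv : u ≤ v) :
    activeValue P.o₀ P.o₁ P.t₁ P.t₁' P.R₀ P.R₁ P.β f v
      - activeValue P.o₀ P.o₁ P.t₁ P.t₁' P.R₀ P.R₁ P.β f u
      ≤ P.L * (v - u) := by
  have h1 := P.Av_diff_eq f u v
  have h2 := P.Ef_lip hl hu hv huv
  have h3 : P.β * (P.Ef f v - P.Ef f u) ≤ P.β * (P.α * P.L * (v - u)) :=
    mul_le_mul_of_nonneg_left h2 (le_of_lt P.hβ0)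
  have h4 : P.ρ * (v - u) + P.β * (P.α * P.L * (v - u)) = P.L * (v - u) := by
    have := P.hLeq; nlinarith [P.hLeq]
  linarith

-- threshold monotonicity of active-minus-passive
lemma phi_mono {m : ℝ} {f : ℝ → ℝ} (hm : MonoI f) (hl : P.LipI f)
    {u v : ℝ} (hu : u ∈ unitI) (hv : v ∈ unitI) (huv : u ≤ v) :
    activeValue P.o₀ P.o₁ P.t₁ P.t₁' P.R₀ P.R₁ P.β f u
        - passiveValue P.t₀ P.t₀' P.β m f u
      ≤ activeValue P.o₀ P.o₁ P.t₁ P.t₁' P.R₀ P.R₁ P.β f v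
        - passiveValue P.t₀ P.t₀' P.β m f v := by
  have h1 := P.Av_diff_eq f u v
  have h2 := P.Ef_mono hm hu hv huv
  have h3 := P.Pv_diff_le (m := m) hl hu hv huv
  have h4 : P.β * (P.α * P.L) * (v - u) ≤ P.ρ * (v - u) := by
    have h5 : P.α * P.β * P.L ≤ P.ρ := P.hαβL
    nlinarith [(by linarith : (0:ℝ) ≤ v - u)]
  nlinarith [P.hβ0]

lemma Tb_step_mono_lip {m : ℝ} {f : ℝ → ℝ} (hm : MonoI f) (hl : P.LipI f) :
    MonoI (P.Tb m f) ∧ P.LipI (P.Tb m f) := by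
  constructor
  · intro u v hu hv huv
    exact max_le_max (P.Pv_mono hm hu hv huv) (P.Av_mono hm hu hv huv)
  · intro u v hu hv huv
    have h1 := P.Pv_diff_le (m := m) hl hu hv huv
    have h2 := P.Av_diff_le hl hu hv huv
    have h3 : P.β * (P.α * P.L) * (v - u) ≤ P.L * (v - u) := by
      have hαβ1 : P.β * P.α ≤ 1 := by nlinarith [P.hαβ', P.hβ0, P.hα0]
      nlinarith [P.hL0, (by linarith : (0:ℝ) ≤ v - u), mul_nonneg P.hL0 (by linarith : (0:ℝ) ≤ v - u)]
    unfold Tb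
    have h4 : passiveValue P.t₀ P.t₀' P.β m f v ≤ passiveValue P.t₀ P.t₀' P.β m f u + P.L * (v - u) := by
      linarith
    have h5 : activeValue P.o₀ P.o₁ P.t₁ P.t₁' P.R₀ P.R₁ P.β f v
        ≤ activeValue P.o₀ P.o₁ P.t₁ P.t₁' P.R₀ P.R₁ P.β f u + P.L * (v - u) := by
      linarith
    have := max_le_max h4 h5
    have hmax : max (passiveValue P.t₀ P.t₀' P.β m f u + P.L * (v - u))
        (activeValue P.o₀ P.o₁ P.t₁ P.t₁' P.R₀ P.R₁ P.β f u + P.L * (v - u))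
        = max (passiveValue P.t₀ P.t₀' P.β m f u)
          (activeValue P.o₀ P.o₁ P.t₁ P.t₁' P.R₀ P.R₁ P.β f u) + P.L * (v - u) := by
      rw [max_add_add_right]
    linarith [le_trans this (le_of_eq hmax)]

lemma W_step {m m' : ℝ} (hmm : m ≤ m') {f f' : ℝ → ℝ}
    (hfm : MonoI f) (hfl : P.LipI f) (hfm' : MonoI f') (hfl' : P.LipI f')
    (hwm : WMonoI f f') (hwo : WOscI (m' - m) f f') :
    WMonoI (P.Tb m f) (P.Tb m' f') ∧ WOscI (m' - m) (P.Tb m f) (P.Tb m' f') := by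
  set Δ := m' - m with hΔdef
  have hΔ0 : 0 ≤ Δ := by linarith
  have hbΔ : P.β * Δ ≤ Δ := by
    nlinarith [mul_nonneg (by linarith [P.hβ1] : (0:ℝ) ≤ 1 - P.β) (by linarith : (0:ℝ) ≤ Δ)]
  have hβ0 := P.hβ0
  have hβ1 := P.hβ1
  -- W as a function
  set W : ℝ → ℝ := fun y => f' y - f y with hW
  have hWanti : ∀ p q, p ∈ unitI → q ∈ unitI → p ≤ q → W q ≤ W p := by
    intro p q hp hq hpq; exact hwm p q hp hq hpq
  have hWosc : ∀ p q, p ∈ unitI → q ∈ unitI → W p - W q ≤ Δ := by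
    intro p q hp hq; exact hwo p q hp hq
  have hEfW : ∀ x, P.Ef W x = P.Ef f' x - P.Ef f x := by
    intro x; rw [hW]; exact P.Ef_sub f f' x
  constructor
  · -- WMono
    intro u v hu hv huv
    rcases le_total (activeValue P.o₀ P.o₁ P.t₁ P.t₁' P.R₀ P.R₁ P.β f' v)
        (passiveValue P.t₀ P.t₀' P.β m' f' v) with hc | hc
    · -- m'-passive optimal at v
      have htv : P.Tb m' f' v = passiveValue P.t₀ P.t₀' P.β m' f' v := max_eq_left hc
      have hcu : activeValue P.o₀ P.o₁ P.t₁ P.t₁' P.R₀ P.R₁ P.β f' u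
          ≤ passiveValue P.t₀ P.t₀' P.β m' f' u := by
        have := P.phi_mono (m := m') hfm' hfl' hu hv huv
        linarith
      have htu : P.Tb m' f' u = passiveValue P.t₀ P.t₀' P.β m' f' u := max_eq_left hcu
      rcases le_total (passiveValue P.t₀ P.t₀' P.β m f u)
          (activeValue P.o₀ P.o₁ P.t₁ P.t₁' P.R₀ P.R₁ P.β f u) with hd | hd
      · -- m-active optimal at u, hence at v
        have hdu : P.Tb m f u = activeValue P.o₀ P.o₁ P.t₁ P.t₁' P.R₀ P.R₁ P.β f u :=
          max_eq_right hd
        have hdv' : passiveValue P.t₀ P.t₀' P.β m f v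
            ≤ activeValue P.o₀ P.o₁ P.t₁ P.t₁' P.R₀ P.R₁ P.β f v := by
          have := P.phi_mono (m := m) hfm hfl hu hv huv
          linarith
        have hdv : P.Tb m f v = activeValue P.o₀ P.o₁ P.t₁ P.t₁' P.R₀ P.R₁ P.β f v :=
          max_eq_right hdv'
        rw [htv, htu, hdu, hdv]
        -- P'v - P'u ≤ Av - Au
        have e1 : passiveValue P.t₀ P.t₀' P.β m' f' v - passiveValue P.t₀ P.t₀' P.β m' f' u
            = P.β * (f' (P.zm v) - f' (P.zm u)) := by
          rw [P.Pv_eq, P.Pv_eq]; ring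
        have e2 : f' (P.zm v) - f' (P.zm u) ≤ P.L * ((P.t₀ - P.t₀') * (v - u)) := by
          have := hfl' _ _ (P.zm_mem hu) (P.zm_mem hv) (P.zm_mono huv)
          rwa [P.zm_diff u v] at this
        have e3 : P.L * ((P.t₀ - P.t₀') * (v - u)) ≤ P.α * P.L * (v - u) := by
          nlinarith [mul_nonneg (mul_nonneg (sub_nonneg.mpr P.hα_t0) P.hL0)
            (by linarith : (0:ℝ) ≤ v - u)]
        have e4 : P.β * (P.α * P.L * (v - u)) ≤ P.ρ * (v - u) := by
          nlinarith [P.hαβL, (by linarith : (0:ℝ) ≤ v - u)]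
        have e5 := P.Av_diff_eq f u v
        have e6 := P.Ef_mono hfm hu hv huv
        have e7 : P.β * (f' (P.zm v) - f' (P.zm u)) ≤ P.ρ * (v - u) := by
          nlinarith [mul_le_mul_of_nonneg_left (le_trans e2 e3) hβ0.le]
        have e8 := mul_le_mul_of_nonneg_left e6 hβ0.le
        rw [mul_sub] at e5
        linarith
      · -- m-passive optimal at u
        have hdu : P.Tb m f u = passiveValue P.t₀ P.t₀' P.β m f u := max_eq_left hd
        have hdv : passiveValue P.t₀ P.t₀' P.β m f v ≤ P.Tb m f v := le_max_left _ _
        rw [htv, htu, hdu]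
        have e1 : W (P.zm v) ≤ W (P.zm u) :=
          hWanti _ _ (P.zm_mem hu) (P.zm_mem hv) (P.zm_mono huv)
        have e2 : passiveValue P.t₀ P.t₀' P.β m' f' v - passiveValue P.t₀ P.t₀' P.β m f v
            = Δ + P.β * W (P.zm v) := by
          rw [P.Pv_eq, P.Pv_eq, hW]; simp only; ring
        have e3 : passiveValue P.t₀ P.t₀' P.β m' f' u - passiveValue P.t₀ P.t₀' P.β m f u
            = Δ + P.β * W (P.zm u) := by
          rw [P.Pv_eq, P.Pv_eq, hW]; simp only; ring
        have e5 := mul_le_mul_of_nonneg_left e1 hβ0.le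
        linarith [hdv]
    · -- m'-active optimal at v
      have htv : P.Tb m' f' v = activeValue P.o₀ P.o₁ P.t₁ P.t₁' P.R₀ P.R₁ P.β f' v :=
        max_eq_right hc
      rcases le_total (passiveValue P.t₀ P.t₀' P.β m f u)
          (activeValue P.o₀ P.o₁ P.t₁ P.t₁' P.R₀ P.R₁ P.β f u) with hd | hd
      · -- m-active at u
        have hdu : P.Tb m f u = activeValue P.o₀ P.o₁ P.t₁ P.t₁' P.R₀ P.R₁ P.β f u :=
          max_eq_right hd
        have h1 : P.Tb m f v ≥ activeValue P.o₀ P.o₁ P.t₁ P.t₁' P.R₀ P.R₁ P.β f v :=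
          le_max_right _ _
        have h2 : P.Tb m' f' u ≥ activeValue P.o₀ P.o₁ P.t₁ P.t₁' P.R₀ P.R₁ P.β f' u :=
          le_max_right _ _
        have e1 : activeValue P.o₀ P.o₁ P.t₁ P.t₁' P.R₀ P.R₁ P.β f' v
            - activeValue P.o₀ P.o₁ P.t₁ P.t₁' P.R₀ P.R₁ P.β f v = P.β * P.Ef W v := by
          rw [P.Av_eq', P.Av_eq', hEfW]; ring
        have e2 : activeValue P.o₀ P.o₁ P.t₁ P.t₁' P.R₀ P.R₁ P.β f' u
            - activeValue P.o₀ P.o₁ P.t₁ P.t₁' P.R₀ P.R₁ P.β f u = P.β * P.Ef W u := by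
          rw [P.Av_eq', P.Av_eq', hEfW]; ring
        have e3 : P.Ef W v ≤ P.Ef W u := P.Ef_anti hWanti hu hv huv
        have e4 := mul_le_mul_of_nonneg_left e3 hβ0.le
        rw [htv, hdu]
        linarith
      · -- m-passive at u
        have hdu : P.Tb m f u = passiveValue P.t₀ P.t₀' P.β m f u := max_eq_left hd
        have h1 : P.Tb m f v ≥ activeValue P.o₀ P.o₁ P.t₁ P.t₁' P.R₀ P.R₁ P.β f v :=
          le_max_right _ _
        have h2 : P.Tb m' f' u ≥ passiveValue P.t₀ P.t₀' P.β m' f' u := le_max_left _ _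
        have e1 : activeValue P.o₀ P.o₁ P.t₁ P.t₁' P.R₀ P.R₁ P.β f' v
            - activeValue P.o₀ P.o₁ P.t₁ P.t₁' P.R₀ P.R₁ P.β f v = P.β * P.Ef W v := by
          rw [P.Av_eq', P.Av_eq', hEfW]; ring
        have e2 : passiveValue P.t₀ P.t₀' P.β m' f' u - passiveValue P.t₀ P.t₀' P.β m f u
            = Δ + P.β * W (P.zm u) := by
          rw [P.Pv_eq, P.Pv_eq, hW]; simp only; ring
        have e3 : P.Ef W v - W (P.zm u) ≤ Δ := P.Ef_point_osc hWosc hv (P.zm_mem hu)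
        have e4 : P.β * (P.Ef W v - W (P.zm u)) ≤ P.β * Δ :=
          mul_le_mul_of_nonneg_left e3 hβ0.le
        rw [mul_sub] at e4
        rw [htv, hdu]
        linarith
  · -- WOsc
    intro u v hu hv
    rcases le_total (activeValue P.o₀ P.o₁ P.t₁ P.t₁' P.R₀ P.R₁ P.β f' u)
        (passiveValue P.t₀ P.t₀' P.β m' f' u) with hc | hc
    · -- m'-passive at u
      have htu : P.Tb m' f' u = passiveValue P.t₀ P.t₀' P.β m' f' u := max_eq_left hc
      have h1 : P.Tb m f u ≥ passiveValue P.t₀ P.t₀' P.β m f u := le_max_left _ _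
      have e1 : passiveValue P.t₀ P.t₀' P.β m' f' u - passiveValue P.t₀ P.t₀' P.β m f u
          = Δ + P.β * W (P.zm u) := by
        rw [P.Pv_eq, P.Pv_eq, hW]; simp only; ring
      rcases le_total (activeValue P.o₀ P.o₁ P.t₁ P.t₁' P.R₀ P.R₁ P.β f v)
          (passiveValue P.t₀ P.t₀' P.β m f v) with hd | hd
      · -- m-passive at v
        have hdv : P.Tb m f v = passiveValue P.t₀ P.t₀' P.β m f v := max_eq_left hd
        have h2 : P.Tb m' f' v ≥ passiveValue P.t₀ P.t₀' P.β m' f' v := le_max_left _ _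
        have e2 : passiveValue P.t₀ P.t₀' P.β m' f' v - passiveValue P.t₀ P.t₀' P.β m f v
            = Δ + P.β * W (P.zm v) := by
          rw [P.Pv_eq, P.Pv_eq, hW]; simp only; ring
        have e3 : W (P.zm u) - W (P.zm v) ≤ Δ := hWosc _ _ (P.zm_mem hu) (P.zm_mem hv)
        have e4 := mul_le_mul_of_nonneg_left e3 hβ0.le
        rw [mul_sub] at e4
        rw [htu, hdv]
        linarith
      · -- m-active at v
        have hdv : P.Tb m f v = activeValue P.o₀ P.o₁ P.t₁ P.t₁' P.R₀ P.R₁ P.β f v :=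
          max_eq_right hd
        have h2 : P.Tb m' f' v ≥ activeValue P.o₀ P.o₁ P.t₁ P.t₁' P.R₀ P.R₁ P.β f' v :=
          le_max_right _ _
        have e2 : activeValue P.o₀ P.o₁ P.t₁ P.t₁' P.R₀ P.R₁ P.β f' v
            - activeValue P.o₀ P.o₁ P.t₁ P.t₁' P.R₀ P.R₁ P.β f v = P.β * P.Ef W v := by
          rw [P.Av_eq', P.Av_eq', hEfW]; ring
        have e3 : W (P.zm u) ≤ P.Ef W v :=
          P.point_le_Ef hWanti hv (P.zm_mem hu) (P.am_le_zm hv hu) (P.bm_le_zm hv hu)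
        have e4 := mul_le_mul_of_nonneg_left e3 hβ0.le
        rw [htu, hdv]
        linarith
    · -- m'-active at u
      have htu : P.Tb m' f' u = activeValue P.o₀ P.o₁ P.t₁ P.t₁' P.R₀ P.R₁ P.β f' u :=
        max_eq_right hc
      have h1 : P.Tb m f u ≥ activeValue P.o₀ P.o₁ P.t₁ P.t₁' P.R₀ P.R₁ P.β f u :=
        le_max_right _ _
      have e1 : activeValue P.o₀ P.o₁ P.t₁ P.t₁' P.R₀ P.R₁ P.β f' u
          - activeValue P.o₀ P.o₁ P.t₁ P.t₁' P.R₀ P.R₁ P.β f u = P.β * P.Ef W u := by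
        rw [P.Av_eq', P.Av_eq', hEfW]; ring
      rcases le_total (activeValue P.o₀ P.o₁ P.t₁ P.t₁' P.R₀ P.R₁ P.β f v)
          (passiveValue P.t₀ P.t₀' P.β m f v) with hd | hd
      · -- m-passive at v
        have hdv : P.Tb m f v = passiveValue P.t₀ P.t₀' P.β m f v := max_eq_left hd
        have h2 : P.Tb m' f' v ≥ passiveValue P.t₀ P.t₀' P.β m' f' v := le_max_left _ _
        have e2 : passiveValue P.t₀ P.t₀' P.β m' f' v - passiveValue P.t₀ P.t₀' P.β m f v
            = Δ + P.β * W (P.zm v) := by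
          rw [P.Pv_eq, P.Pv_eq, hW]; simp only; ring
        have e3 : P.Ef W u - W (P.zm v) ≤ Δ := P.Ef_point_osc hWosc hu (P.zm_mem hv)
        have e4 := mul_le_mul_of_nonneg_left e3 hβ0.le
        rw [mul_sub] at e4
        rw [htu, hdv]
        linarith
      · -- m-active at v
        have hdv : P.Tb m f v = activeValue P.o₀ P.o₁ P.t₁ P.t₁' P.R₀ P.R₁ P.β f v :=
          max_eq_right hd
        have h2 : P.Tb m' f' v ≥ activeValue P.o₀ P.o₁ P.t₁ P.t₁' P.R₀ P.R₁ P.β f' v :=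
          le_max_right _ _
        have e2 : activeValue P.o₀ P.o₁ P.t₁ P.t₁' P.R₀ P.R₁ P.β f' v
            - activeValue P.o₀ P.o₁ P.t₁ P.t₁' P.R₀ P.R₁ P.β f v = P.β * P.Ef W v := by
          rw [P.Av_eq', P.Av_eq', hEfW]; ring
        have e3 : P.Ef W u - P.Ef W v ≤ Δ := P.Ef_osc hWosc hu hv
        have e4 := mul_le_mul_of_nonneg_left e3 hβ0.le
        rw [mul_sub] at e4
        rw [htu, hdv]
        linarith

noncomputable def Vit (m : ℝ) (n : ℕ) : ℝ → ℝ :=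
  Nat.rec (motive := fun _ => ℝ → ℝ) (fun _ => 0) (fun _ prev => P.Tb m prev) n

lemma Vit_zero (m : ℝ) (x : ℝ) : P.Vit m 0 x = 0 := rfl

lemma Vit_succ (m : ℝ) (n : ℕ) : P.Vit m (n + 1) = P.Tb m (P.Vit m n) := rfl

lemma invariants {m m' : ℝ} (hmm : m ≤ m') : ∀ n : ℕ,
    MonoI (P.Vit m n) ∧ P.LipI (P.Vit m n) ∧ MonoI (P.Vit m' n) ∧ P.LipI (P.Vit m' n)
      ∧ WMonoI (P.Vit m n) (P.Vit m' n) ∧ WOscI (m' - m) (P.Vit m n) (P.Vit m' n) := by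
  intro n
  induction n with
  | zero =>
    have hlip : P.LipI (P.Vit m 0) := by
      intro p q hp hq hpq
      rw [P.Vit_zero, P.Vit_zero]
      have := mul_nonneg P.hL0 (by linarith : (0:ℝ) ≤ q - p)
      linarith
    have hlip' : P.LipI (P.Vit m' 0) := by
      intro p q hp hq hpq
      rw [P.Vit_zero, P.Vit_zero]
      have := mul_nonneg P.hL0 (by linarith : (0:ℝ) ≤ q - p)
      linarith
    refine ⟨?_, hlip, ?_, hlip', ?_, ?_⟩
    · intro p q hp hq hpq; simp only [P.Vit_zero]; exact le_rfl
    · intro p q hp hq hpq; simp only [P.Vit_zero]; exact le_rfl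
    · intro p q hp hq hpq; simp only [P.Vit_zero]; exact le_rfl
    · intro p q hp hq; simp only [P.Vit_zero]; linarith
  | succ n ih =>
    obtain ⟨h1, h2, h3, h4, h5, h6⟩ := ih
    have hA := P.Tb_step_mono_lip (m := m) h1 h2
    have hB := P.Tb_step_mono_lip (m := m') h3 h4
    have hC := P.W_step hmm h1 h2 h3 h4 h5 h6
    rw [P.Vit_succ, P.Vit_succ]
    exact ⟨hA.1, hA.2, hB.1, hB.2, hC.1, hC.2⟩

lemma Vit_approx {m : ℝ} {Vf : ℝ → ℝ} {C : ℝ}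
    (hbell : ∀ x ∈ unitI, Vf x = P.Tb m Vf x)
    (hC : ∀ x ∈ unitI, |Vf x| ≤ C) :
    ∀ n : ℕ, ∀ x ∈ unitI, |Vf x - P.Vit m n x| ≤ P.β ^ n * C := by
  intro n
  induction n with
  | zero =>
    intro x hx
    rw [P.Vit_zero]
    simpa using hC x hx
  | succ n ih =>
    intro x hx
    rw [hbell x hx, P.Vit_succ]
    show |P.Tb m Vf x - P.Tb m (P.Vit m n) x| ≤ _
    unfold Tb
    have hP : |passiveValue P.t₀ P.t₀' P.β m Vf x - passiveValue P.t₀ P.t₀' P.β m (P.Vit m n) x|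
        ≤ P.β ^ (n+1) * C := by
      rw [P.Pv_eq, P.Pv_eq]
      have : m + P.β * Vf (P.zm x) - (m + P.β * P.Vit m n (P.zm x))
          = P.β * (Vf (P.zm x) - P.Vit m n (P.zm x)) := by ring
      rw [this, abs_mul, abs_of_pos P.hβ0]
      have := ih (P.zm x) (P.zm_mem hx)
      calc P.β * |Vf (P.zm x) - P.Vit m n (P.zm x)| ≤ P.β * (P.β ^ n * C) :=
            mul_le_mul_of_nonneg_left this P.hβ0.le
        _ = P.β ^ (n+1) * C := by ring
    have hA : |activeValue P.o₀ P.o₁ P.t₁ P.t₁' P.R₀ P.R₁ P.β Vf x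
        - activeValue P.o₀ P.o₁ P.t₁ P.t₁' P.R₀ P.R₁ P.β (P.Vit m n) x|
        ≤ P.β ^ (n+1) * C := by
      rw [P.Av_eq', P.Av_eq']
      have e : actReward P.o₀ P.o₁ P.R₀ P.R₁ x + P.β * P.Ef Vf x
          - (actReward P.o₀ P.o₁ P.R₀ P.R₁ x + P.β * P.Ef (P.Vit m n) x)
          = P.β * (P.pp x * (Vf (P.am x) - P.Vit m n (P.am x))
            + (1 - P.pp x) * (Vf (P.bm x) - P.Vit m n (P.bm x))) := by
        unfold Ef; ring
      rw [e, abs_mul, abs_of_pos P.hβ0]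
      have ha := ih (P.am x) (P.am_mem hx)
      have hb := ih (P.bm x) (P.bm_mem hx)
      have habs : |P.pp x * (Vf (P.am x) - P.Vit m n (P.am x))
          + (1 - P.pp x) * (Vf (P.bm x) - P.Vit m n (P.bm x))| ≤ P.β ^ n * C := by
        have h1 := abs_add_le (P.pp x * (Vf (P.am x) - P.Vit m n (P.am x)))
          ((1 - P.pp x) * (Vf (P.bm x) - P.Vit m n (P.bm x)))
        rw [abs_mul, abs_mul, abs_of_nonneg (P.pp_nonneg hx),
          abs_of_nonneg (le_of_lt (P.one_sub_pp_pos hx))] at h1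
        have h2 : P.pp x * |Vf (P.am x) - P.Vit m n (P.am x)| ≤ P.pp x * (P.β ^ n * C) :=
          mul_le_mul_of_nonneg_left ha (P.pp_nonneg hx)
        have h3 : (1 - P.pp x) * |Vf (P.bm x) - P.Vit m n (P.bm x)|
            ≤ (1 - P.pp x) * (P.β ^ n * C) :=
          mul_le_mul_of_nonneg_left hb (le_of_lt (P.one_sub_pp_pos hx))
        nlinarith
      calc P.β * |P.pp x * (Vf (P.am x) - P.Vit m n (P.am x))
            + (1 - P.pp x) * (Vf (P.bm x) - P.Vit m n (P.bm x))| ≤ P.β * (P.β ^ n * C) :=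
            mul_le_mul_of_nonneg_left habs P.hβ0.le
        _ = P.β ^ (n+1) * C := by ring
    calc |max (passiveValue P.t₀ P.t₀' P.β m Vf x)
          (activeValue P.o₀ P.o₁ P.t₁ P.t₁' P.R₀ P.R₁ P.β Vf x)
        - max (passiveValue P.t₀ P.t₀' P.β m (P.Vit m n) x)
          (activeValue P.o₀ P.o₁ P.t₁ P.t₁' P.R₀ P.R₁ P.β (P.Vit m n) x)|
        ≤ max |passiveValue P.t₀ P.t₀' P.β m Vf x - passiveValue P.t₀ P.t₀' P.β m (P.Vit m n) x|
          |activeValue P.o₀ P.o₁ P.t₁ P.t₁' P.R₀ P.R₁ P.β Vf x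
            - activeValue P.o₀ P.o₁ P.t₁ P.t₁' P.R₀ P.R₁ P.β (P.Vit m n) x| :=
        abs_max_sub_max_le_max _ _ _ _
      _ ≤ P.β ^ (n+1) * C := max_le hP hA

end IndexCtx

/-- Indexability of the two-state restless bandit arm when
`α·β ≤ 1/2` and `Γ₁(1) ≤ Γ₀(0)`: if the passive action is optimal at belief `x`
with subsidy `m`, it remains optimal with every larger subsidy `m'`. -/
theorem indexable_of_alpha_beta_le_half
    (o₀ o₁ t₁ t₁' t₀ t₀' R₀ R₁ β : ℝ)
    (ho₀ : o₀ ∈ Set.Ioo (0:ℝ) 1) (ho₁ : o₁ ∈ Set.Ioo (0:ℝ) 1) (ho : o₀ < o₁)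
    (ht₁lt : t₁' < t₁) (ht₀lt : t₀' < t₀)
    (ht₁ : t₁ ∈ Set.Icc (0:ℝ) 1) (ht₁' : t₁' ∈ Set.Icc (0:ℝ) 1)
    (ht₀ : t₀ ∈ Set.Icc (0:ℝ) 1) (ht₀' : t₀' ∈ Set.Icc (0:ℝ) 1)
    (hR : R₀ ≤ R₁) (hβ : β ∈ Set.Ioo (0:ℝ) 1)
    (V : ℝ → ℝ → ℝ)
    (hbdd : ∀ m : ℝ, ∃ M : ℝ, ∀ x ∈ Set.Icc (0:ℝ) 1, |V m x| ≤ M)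
    (hbellman : ∀ m : ℝ, ∀ x ∈ Set.Icc (0:ℝ) 1,
      V m x = max (passiveValue t₀ t₀' β m (V m) x)
        (activeValue o₀ o₁ t₁ t₁' R₀ R₁ β (V m) x))
    (hαβ : max (t₁ - t₁') (t₀ - t₀') * β ≤ 1/2)
    (hΓ : GammaMap t₁ t₁' 1 ≤ GammaMap t₀ t₀' 0) :
    ∀ x ∈ Set.Icc (0:ℝ) 1, ∀ m m' : ℝ, m ≤ m' →
      activeValue o₀ o₁ t₁ t₁' R₀ R₁ β (V m) x ≤ passiveValue t₀ t₀' β m (V m) x →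
      activeValue o₀ o₁ t₁ t₁' R₀ R₁ β (V m') x ≤ passiveValue t₀ t₀' β m' (V m') x := by
  intro x hx m m' hmm hpass
  set P : IndexCtx :=
    ⟨o₀, o₁, t₁, t₁', t₀, t₀', R₀, R₁, β, ho₀, ho₁, ho, ht₁lt, ht₀lt,
      ht₁, ht₁', ht₀, ht₀', hR, hβ, hαβ, hΓ⟩ with hP
  have hx' : x ∈ unitI := hx
  obtain ⟨Cm, hCm⟩ := hbdd m
  obtain ⟨Cm', hCm'⟩ := hbdd m'
  have hbell1 : ∀ y ∈ unitI, V m y = P.Tb m (V m) y := fun y hy => hbellman m y hy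
  have hbell2 : ∀ y ∈ unitI, V m' y = P.Tb m' (V m') y := fun y hy => hbellman m' y hy
  have happ1 := P.Vit_approx hbell1 hCm
  have happ2 := P.Vit_approx hbell2 hCm'
  -- oscillation bound for the true difference function
  have hosc : ∀ u v, u ∈ unitI → v ∈ unitI →
      (V m' u - V m u) - (V m' v - V m v) ≤ m' - m := by
    intro u v hu hv
    set D : ℝ := 2 * Cm + 2 * Cm' with hD
    have h0 : Filter.Tendsto (fun n : ℕ => P.β ^ n) Filter.atTop (nhds 0) :=
      tendsto_pow_atTop_nhds_zero_of_lt_one P.hβ0.le P.hβ1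
    have h1 : Filter.Tendsto (fun n : ℕ => (m' - m) + D * P.β ^ n) Filter.atTop
        (nhds ((m' - m) + D * 0)) :=
      Filter.Tendsto.add tendsto_const_nhds (Filter.Tendsto.const_mul D h0)
    rw [mul_zero, add_zero] at h1
    refine ge_of_tendsto' h1 (fun n => ?_)
    have hi := ((P.invariants hmm n).2.2.2.2.2) u v hu hv
    have a1 := abs_le.mp (happ1 n u hu)
    have a2 := abs_le.mp (happ1 n v hv)
    have a3 := abs_le.mp (happ2 n u hu)
    have a4 := abs_le.mp (happ2 n v hv)
    have hbn : 0 ≤ P.β ^ n := pow_nonneg P.hβ0.le n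
    have hCmn : P.β ^ n * Cm ≤ P.β ^ n * Cm + P.β ^ n * Cm' := by
      nlinarith [abs_nonneg (V m' u - P.Vit m' n u), a3.2, a3.1]
    nlinarith [a1.1, a1.2, a2.1, a2.2, a3.1, a3.2, a4.1, a4.2, hi]
  -- apply at the relevant points
  have h1 : (V m' (P.am x) - V m (P.am x)) - (V m' (P.zm x) - V m (P.zm x)) ≤ m' - m :=
    hosc _ _ (P.am_mem hx') (P.zm_mem hx')
  have h2 : (V m' (P.bm x) - V m (P.bm x)) - (V m' (P.zm x) - V m (P.zm x)) ≤ m' - m :=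
    hosc _ _ (P.bm_mem hx') (P.zm_mem hx')
  have hpass' : activeValue P.o₀ P.o₁ P.t₁ P.t₁' P.R₀ P.R₁ P.β (V m) x
      ≤ passiveValue P.t₀ P.t₀' P.β m (V m) x := hpass
  show activeValue P.o₀ P.o₁ P.t₁ P.t₁' P.R₀ P.R₁ P.β (V m') x
      ≤ passiveValue P.t₀ P.t₀' P.β m' (V m') x
  have gA := P.Av_eq' (V m) x
  have gA' := P.Av_eq' (V m') x
  have gP := P.Pv_eq m (V m) x
  have gP' := P.Pv_eq m' (V m') x
  have eEf : P.Ef (V m') x - P.Ef (V m) x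
      = P.pp x * (V m' (P.am x) - V m (P.am x))
        + (1 - P.pp x) * (V m' (P.bm x) - V m (P.bm x)) := by
    unfold IndexCtx.Ef; ring
  have kk : P.Ef (V m') x - P.Ef (V m) x - (V m' (P.zm x) - V m (P.zm x)) ≤ m' - m := by
    have c1 := mul_le_mul_of_nonneg_left h1 (P.pp_nonneg hx')
    have c2 := mul_le_mul_of_nonneg_left h2 (P.one_sub_pp_pos hx').le
    have e2 : P.Ef (V m') x - P.Ef (V m) x - (V m' (P.zm x) - V m (P.zm x))
        = P.pp x * ((V m' (P.am x) - V m (P.am x)) - (V m' (P.zm x) - V m (P.zm x)))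
          + (1 - P.pp x) * ((V m' (P.bm x) - V m (P.bm x)) - (V m' (P.zm x) - V m (P.zm x))) := by
      rw [eEf]; ring
    have esum : P.pp x * (m' - m) + (1 - P.pp x) * (m' - m) = m' - m := by ring
    rw [e2]
    linarith
  have key := mul_le_mul_of_nonneg_left kk P.hβ0.le
  rw [mul_sub, mul_sub, mul_sub] at key
  have hβΔ : P.β * (m' - m) ≤ m' - m := by
    nlinarith [mul_nonneg (sub_nonneg.mpr hmm) (by linarith [P.hβ1] : (0:ℝ) ≤ 1 - P.β)]
  linarith
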